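/- Let w be the minimum of all the coordinates of r and s. If t ≥ 2g − 1 − q³·w, then the cardinality of Ω_{r,s,t} is #Ω_{r,s,t} = 1 − g + t + |r| + q·|s|, where |r| = Σ_{μ=0}^{q−1} r_μ and |s| = Σ_{ν=1}^{q²−1} s_ν. -/
import Mathlib


open Finset

private lemma omega_ediv_unique {d x j : ℤ} (hd : 0 < d) :
    (0 ≤ x + d * j ∧ x + d * j < d) ↔ j = -(x / d) := by
  constructor
  · rintro ⟨h0, h1⟩
    have hz : (x + d * j) / d = 0 := Int.ediv_eq_zero_of_lt h0 h1
    rw [show x + d * j = x + j * d by ring, Int.add_mul_ediv_right _ _ hd.ne'] at hz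
    omega
  · rintro rfl
    have h := Int.emod_def x d
    have h0 := Int.emod_nonneg x hd.ne'
    have h1 := Int.emod_lt_of_pos x hd
    constructor <;> nlinarith [h, h0, h1]

private lemma omega_sum_Ico_shift (f : ℤ → ℤ) (a b c : ℤ) :
    ∑ x ∈ Finset.Ico (a + c) (b + c), f x = ∑ x ∈ Finset.Ico a b, f (x + c) := by
  apply Finset.sum_nbij' (fun x => x - c) (fun x => x + c) <;>
    simp_all [Finset.mem_Ico] <;> intros <;> omega

private lemma omega_Ico_singleton (a : ℤ) : Finset.Ico a (a + 1) = {a} := by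
  ext x; simp [Finset.mem_Ico]; omega

private lemma omega_sum_range_intIco (g : ℤ → ℤ) (k : ℕ) :
    ∑ e ∈ Finset.Ico (0:ℤ) (k:ℤ), g e = ∑ j ∈ Finset.range k, g j := by
  induction k with
  | zero => simp
  | succ k ih =>
    rw [Finset.sum_range_succ, ← ih, show ((k+1:ℕ):ℤ) = (k:ℤ) + 1 by push_cast; ring,
      ← Finset.Ico_union_Ico_eq_Ico (by positivity : (0:ℤ) ≤ (k:ℤ)) (by omega : (k:ℤ) ≤ (k:ℤ) + 1),
      Finset.sum_union (Finset.Ico_disjoint_Ico_consecutive _ _ _), omega_Ico_singleton,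
      Finset.sum_singleton]


private lemma omega_gauss (d : ℤ) (hd : 0 ≤ d) :
    2 * ∑ y ∈ Finset.Ico (0:ℤ) d, y = d * (d - 1) := by
  obtain ⟨k, rfl⟩ : ∃ k : ℕ, d = (k:ℤ) := ⟨d.toNat, by omega⟩
  rw [omega_sum_range_intIco (fun y => y) k]
  have hnat := Finset.sum_range_id_mul_two k
  have hcast : ((∑ j ∈ Finset.range k, j : ℕ) : ℤ) = ∑ j ∈ Finset.range k, (j:ℤ) := by
    push_cast; rfl
  cases k with
  | zero => simp
  | succ k =>
    have h2 : ((∑ j ∈ Finset.range (k+1), j : ℕ) : ℤ) * 2 = ((k:ℤ)+1) * (k:ℤ) := by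
      have h3 := congrArg (fun x : ℕ => (x:ℤ)) hnat
      simp only [Nat.add_sub_cancel] at h3
      push_cast at h3
      linarith [h3]
    push_cast
    linear_combination h2 - 2 * hcast

private lemma omega_sum_emod_window {d c : ℤ} (hd : 0 < d) (hc : IsCoprime d c) (u L : ℤ) :
    (∑ b ∈ Finset.Ico L (L + d), (u + c * b) % d) = ∑ y ∈ Finset.Ico (0:ℤ) d, y := by
  have hinj : ∀ x ∈ Finset.Ico L (L + d), ∀ y ∈ Finset.Ico L (L + d),
      (u + c * x) % d = (u + c * y) % d → x = y := by
    intro x hx y hy h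
    simp only [Finset.mem_Ico] at hx hy
    have hmod : c * x ≡ c * y [ZMOD d] := Int.ModEq.add_left_cancel' u h
    have hdvd : d ∣ c * (y - x) := by
      have h2 : c * y - c * x = c * (y - x) := by ring
      exact h2 ▸ hmod.dvd
    have hdvd2 : d ∣ (y - x) := hc.dvd_of_dvd_mul_left hdvd
    obtain ⟨z, hz⟩ := hdvd2
    have hz1 : z < 1 := by
      by_contra hcon
      push_neg at hcon
      have : d * 1 ≤ d * z := mul_le_mul_of_nonneg_left hcon hd.le
      linarith
    have hz2 : -1 < z := by
      by_contra hcon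
      push_neg at hcon
      have : d * z ≤ d * (-1) := mul_le_mul_of_nonneg_left hcon hd.le
      linarith
    have hz0 : z = 0 := by omega
    rw [hz0, mul_zero] at hz
    omega
  have himg : Finset.image (fun b => (u + c * b) % d) (Finset.Ico L (L + d))
      = Finset.Ico 0 d := by
    apply Finset.eq_of_subset_of_card_le
    · intro x hx
      simp only [Finset.mem_image] at hx
      obtain ⟨b, _, rfl⟩ := hx
      simp only [Finset.mem_Ico]
      exact ⟨Int.emod_nonneg _ hd.ne', Int.emod_lt_of_pos _ hd⟩
    · rw [Finset.card_image_of_injOn hinj]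
      simp [Int.card_Ico]
  rw [← himg, Finset.sum_image hinj]

/-- master sum: `2 ∑_{b∈[L,L+d)} ⌊(u+cb)/d⌋ = 2u + 2cL + (c-1)(d-1)` for `gcd(c,d)=1`. -/
private lemma omega_sum_ediv_window {d c : ℤ} (hd : 0 < d) (hc : IsCoprime d c) (u L : ℤ) :
    2 * ∑ b ∈ Finset.Ico L (L + d), (u + c * b) / d
      = 2 * u + 2 * c * L + (c - 1) * (d - 1) := by
  have hE := omega_gauss d hd.le
  have hB : ∑ b ∈ Finset.Ico L (L + d), b = d * L + ∑ y ∈ Finset.Ico (0:ℤ) d, y := by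
    have h := omega_sum_Ico_shift (fun x => x) 0 d L
    have e1 : Finset.Ico ((0:ℤ) + L) (d + L) = Finset.Ico L (L + d) := by
      rw [zero_add, add_comm d L]
    rw [e1] at h
    rw [h, Finset.sum_add_distrib, Finset.sum_const, Int.card_Ico, nsmul_eq_mul]
    have : ((d - 0).toNat : ℤ) = d := by omega
    rw [this]
    ring
  have t1 : ∀ b ∈ Finset.Ico L (L + d), d * ((u + c * b) / d)
      = (u + c * b) - (u + c * b) % d := by
    intro b _; have := Int.emod_def (u + c * b) d; omega
  have key : d * ∑ b ∈ Finset.Ico L (L + d), (u + c * b) / d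
      = d * u + c * (d * L + ∑ y ∈ Finset.Ico (0:ℤ) d, y) - ∑ y ∈ Finset.Ico (0:ℤ) d, y := by
    rw [Finset.mul_sum, Finset.sum_congr rfl t1, Finset.sum_sub_distrib,
      omega_sum_emod_window hd hc, Finset.sum_add_distrib, Finset.sum_const, Int.card_Ico,
      nsmul_eq_mul, ← Finset.mul_sum, hB]
    have : ((L + d - L).toNat : ℤ) = d := by omega
    rw [this]
  have h2 : d * (2 * ∑ b ∈ Finset.Ico L (L + d), (u + c * b) / d)
      = d * (2 * u + 2 * c * L + (c - 1) * (d - 1)) := by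
    linear_combination 2 * key + (c - 1) * hE
  exact mul_left_cancel₀ hd.ne' h2

private lemma omega_sum_Ico_split (f : ℤ → ℤ) (L m' : ℤ) (hm : 0 ≤ m') (k : ℕ) :
    ∑ x ∈ Finset.Ico L (L + m' * k), f x
      = ∑ j ∈ Finset.range k, ∑ b ∈ Finset.Ico L (L + m'), f (b + m' * j) := by
  induction k with
  | zero => simp
  | succ k ih =>
    rw [Finset.sum_range_succ, ← ih]
    have h2 : (((k:ℕ) + 1 : ℕ) : ℤ) = (k : ℤ) + 1 := by push_cast; ring
    rw [h2, show L + m' * ((k:ℤ) + 1) = (L + m' * k) + m' by ring,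
      ← Finset.Ico_union_Ico_eq_Ico (by nlinarith : L ≤ L + m' * (k:ℤ))
        (by nlinarith : L + m' * (k:ℤ) ≤ L + m' * (k:ℤ) + m'),
      Finset.sum_union (Finset.Ico_disjoint_Ico_consecutive _ _ _)]
    congr 1
    have h := omega_sum_Ico_shift f L (L + m') (m' * k)
    rw [show L + m' * (k:ℤ) + m' = (L + m') + m' * k by ring, h]

private lemma omega_div_div {m' k x ρ : ℤ} (hm : 0 < m') (hk : 0 < k)
    (h0 : 0 ≤ ρ) (h1 : ρ < m') : (m' * x + ρ) / (m' * k) = x / k := by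
  set a := x / k with ha
  set b := x % k with hb
  have hr0 : 0 ≤ b := Int.emod_nonneg x hk.ne'
  have hr1 : b < k := Int.emod_lt_of_pos x hk
  have hx : x = k * a + b := (Int.mul_ediv_add_emod x k).symm
  have heq : m' * x + ρ = (m' * b + ρ) + a * (m' * k) := by rw [hx]; ring
  rw [heq, Int.add_mul_ediv_right _ _ (by positivity : m' * k ≠ 0),
    Int.ediv_eq_zero_of_lt (by nlinarith) (by nlinarith)]
  omega

private lemma omega_sum_ediv_window_one {d : ℤ} (hd : 0 < d) (u L : ℤ) :
    2 * ∑ b ∈ Finset.Ico L (L + d), (u + b) / d = 2 * u + 2 * L := by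
  have h := omega_sum_ediv_window hd isCoprime_one_right u L
  simp only [one_mul] at h
  linarith

/-- The lattice point set `Ω_{r,s,t}` associated with the GGS curve:
triples `(i, j, k)` with `i + r 0 ≥ 0`, `0 ≤ i + m(q+1) j_μ + r_μ < m(q+1)` for
`μ = 1, …, q-1`, `0 ≤ i + m k_ν + s_ν < m` for `ν = 1, …, q²-1`, and
`q³ i + m(q+1)|j| + m q |k| ≤ t`. -/
def OmegaSet (q : ℕ) (hq : 0 < q) (m : ℤ) (r : Fin q → ℤ) (s : Fin (q ^ 2 - 1) → ℤ)
    (t : ℤ) : Set (ℤ × (Fin (q - 1) → ℤ) × (Fin (q ^ 2 - 1) → ℤ)) :=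
  {p | 0 ≤ p.1 + r ⟨0, hq⟩ ∧
    (∀ μ : Fin (q - 1),
      0 ≤ p.1 + m * ((q : ℤ) + 1) * p.2.1 μ + r ⟨μ.val + 1, by have := μ.isLt; omega⟩ ∧
      p.1 + m * ((q : ℤ) + 1) * p.2.1 μ + r ⟨μ.val + 1, by have := μ.isLt; omega⟩
        < m * ((q : ℤ) + 1)) ∧
    (∀ ν : Fin (q ^ 2 - 1), 0 ≤ p.1 + m * p.2.2 ν + s ν ∧ p.1 + m * p.2.2 ν + s ν < m) ∧
    (q : ℤ) ^ 3 * p.1 + m * ((q : ℤ) + 1) * (∑ μ, p.2.1 μ)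
      + m * (q : ℤ) * (∑ ν, p.2.2 ν) ≤ t}

set_option maxHeartbeats 1600000 in
/-- If `t ≥ 2g - 1 - q³ w`, where `w` is the minimum of all the coordinates of `r` and `s`,
then `#Ω_{r,s,t} = 1 - g + t + |r| + q |s|`. -/
theorem card_OmegaSet (q n : ℕ) (hq : IsPrimePow q) (hn : Odd n) (hn1 : 1 < n)
    (m g : ℤ) (hm : m * ((q : ℤ) + 1) = (q : ℤ) ^ n + 1)
    (hg : 2 * g = ((q : ℤ) - 1) * ((q : ℤ) ^ (n + 1) + (q : ℤ) ^ n - (q : ℤ) ^ 2))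
    (r : Fin q → ℤ) (s : Fin (q ^ 2 - 1) → ℤ) (t w : ℤ)
    (hw : IsLeast (Set.range r ∪ Set.range s) w)
    (ht : 2 * g - 1 - (q : ℤ) ^ 3 * w ≤ t) :
    ((OmegaSet q hq.pos m r s t).ncard : ℤ)
      = 1 - g + t + (∑ μ, r μ) + (q : ℤ) * (∑ ν, s ν) := by
  -- basic facts
  have hq2 : 2 ≤ q := hq.two_le
  obtain ⟨q', rfl⟩ : ∃ q'', q = q'' + 1 := ⟨q - 1, by omega⟩
  set Q : ℤ := ((q' + 1 : ℕ) : ℤ) with hQdef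
  have hQ1 : Q = (q' : ℤ) + 1 := by rw [hQdef]; push_cast; ring
  have hQ2 : (2:ℤ) ≤ Q := by rw [hQ1]; omega
  have hcard1 : ((q' : ℕ) : ℤ) = Q - 1 := by rw [hQ1]; ring
  have hcard2 : (((q' + 1) ^ 2 - 1 : ℕ) : ℤ) = Q ^ 2 - 1 := by
    have h1 : 1 ≤ (q' + 1) ^ 2 := Nat.one_le_pow _ _ (by omega)
    rw [Nat.cast_sub h1]; push_cast [hQ1]; ring
  have hQpos : (0:ℤ) < Q := by linarith
  have hQn : (0:ℤ) < Q ^ n + 1 := by have := pow_pos hQpos n; linarith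
  have hMpos : (0:ℤ) < m * (Q + 1) := by rw [hm]; exact hQn
  have hmpos : (0:ℤ) < m := by nlinarith
  set M : ℤ := m * (Q + 1) with hMdef
  -- coprimality
  have hcopQ : IsCoprime m Q := by
    refine ⟨Q + 1, -Q ^ (n - 1), ?_⟩
    have hn' : n - 1 + 1 = n := by omega
    have h2 : Q ^ (n-1) * Q = Q ^ n := by rw [← pow_succ, hn']
    linear_combination hm - hMdef - h2
  have hcop : IsCoprime m (-(Q ^ 3)) := (hcopQ.pow_right).neg_right
  -- abbreviations
  set r0 : ℤ := r ⟨0, hq.pos⟩ with hr0def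
  set rr : Fin q' → ℤ := fun μ => r μ.succ with hrrdef
  set R' : ℤ := ∑ μ, rr μ with hR'def
  set S' : ℤ := ∑ ν, s ν with hS'def
  set D : ℤ := R' + Q * S' with hDdef
  set F : ℤ → ℤ := fun i =>
    Q ^ 3 * i - M * (∑ μ : Fin q', (i + rr μ) / M)
      - m * Q * (∑ ν : Fin ((q' + 1) ^ 2 - 1), (i + s ν) / m) with hFdef
  -- structural form of F
  have F1 : ∀ i : ℤ, F i = i - D + (∑ μ : Fin q', (i + rr μ) % M)
      + Q * ∑ ν : Fin ((q' + 1) ^ 2 - 1), (i + s ν) % m := by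
    intro i
    have h1 : M * (∑ μ : Fin q', (i + rr μ) / M)
        = (∑ μ : Fin q', (i + rr μ)) - ∑ μ : Fin q', (i + rr μ) % M := by
      rw [Finset.mul_sum, ← Finset.sum_sub_distrib]
      refine Finset.sum_congr rfl fun μ _ => ?_
      have := Int.emod_def (i + rr μ) M
      omega
    have h2 : m * (∑ ν : Fin ((q' + 1) ^ 2 - 1), (i + s ν) / m)
        = (∑ ν : Fin ((q' + 1) ^ 2 - 1), (i + s ν))
          - ∑ ν : Fin ((q' + 1) ^ 2 - 1), (i + s ν) % m := by
      rw [Finset.mul_sum, ← Finset.sum_sub_distrib]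
      refine Finset.sum_congr rfl fun ν _ => ?_
      have := Int.emod_def (i + s ν) m
      omega
    have hs1 : (∑ μ : Fin q', (i + rr μ)) = (Q - 1) * i + R' := by
      rw [Finset.sum_add_distrib, Finset.sum_const, Finset.card_univ, Fintype.card_fin,
        nsmul_eq_mul, hcard1, hR'def]
    have hs2 : (∑ ν : Fin ((q' + 1) ^ 2 - 1), (i + s ν)) = (Q ^ 2 - 1) * i + S' := by
      rw [Finset.sum_add_distrib, Finset.sum_const, Finset.card_univ, Fintype.card_fin,
        nsmul_eq_mul, hcard2, hS'def]
    have hFi : F i = Q ^ 3 * i - M * (∑ μ : Fin q', (i + rr μ) / M)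
        - m * Q * (∑ ν : Fin ((q' + 1) ^ 2 - 1), (i + s ν) / m) := by simp only [hFdef]
    rw [hFi]
    linear_combination -h1 - Q * h2 - hs1 - Q * hs2 + hDdef
  -- min bounds
  have hwr : ∀ idx : Fin (q' + 1), w ≤ r idx := fun idx => hw.2 (Or.inl ⟨idx, rfl⟩)
  have hws : ∀ ν, w ≤ s ν := fun ν => hw.2 (Or.inr ⟨ν, rfl⟩)
  have hRw : (Q - 1) * w ≤ R' := by
    have h1 : ∑ _μ : Fin q', w ≤ ∑ μ : Fin q', rr μ :=
      Finset.sum_le_sum (fun μ _ => hwr _)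
    rw [Finset.sum_const, Finset.card_univ, Fintype.card_fin, nsmul_eq_mul, hcard1] at h1
    exact h1
  have hSw : (Q ^ 2 - 1) * w ≤ S' := by
    have h1 : ∑ _ν : Fin ((q' + 1) ^ 2 - 1), w ≤ ∑ ν, s ν :=
      Finset.sum_le_sum (fun ν _ => hws _)
    rw [Finset.sum_const, Finset.card_univ, Fintype.card_fin, nsmul_eq_mul, hcard2] at h1
    exact h1
  have hr0w : w ≤ r0 := hwr _
  have hDw : Q ^ 3 * w ≤ r0 + D := by
    have h1 : Q * ((Q ^ 2 - 1) * w) ≤ Q * S' :=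
      mul_le_mul_of_nonneg_left hSw (by positivity)
    have h2 : Q ^ 3 * w = w + (Q - 1) * w + Q * ((Q ^ 2 - 1) * w) := by ring
    rw [hDdef]; linarith
  -- genus identities
  have hgen1 : (Q - 1) * (M - 1) + Q * (Q ^ 2 - 1) * (m - 1) = 2 * g := by
    linear_combination (Q ^ 2 - 1) * hm - (Q * (Q - 1)) * hMdef - hg
  have hgen2 : 2 * M - (Q ^ 3 + 1) * (m - 1) - m * Q * (Q + 1) = 2 - 2 * g := by
    linear_combination (Q ^ 2 + 1) * hMdef - (Q ^ 2 - 1) * hm + hg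
  have hgpos : (1:ℤ) ≤ 2 * g := by
    have h1 : Q ^ 2 ≤ Q ^ n := pow_le_pow_right₀ (by linarith) (by omega)
    have h2 : Q ^ n ≤ Q ^ (n+1) := pow_le_pow_right₀ (by linarith) (by omega)
    have h3 : (1:ℤ) ≤ Q ^ n := one_le_pow₀ (by linarith)
    nlinarith [hg]
  -- bounds for F
  have hFlow : ∀ i : ℤ, i ≤ F i + D := by
    intro i
    have hA : 0 ≤ ∑ μ : Fin q', (i + rr μ) % M :=
      Finset.sum_nonneg fun μ _ => Int.emod_nonneg _ hMpos.ne'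
    have hB : 0 ≤ ∑ ν : Fin ((q' + 1) ^ 2 - 1), (i + s ν) % m :=
      Finset.sum_nonneg fun ν _ => Int.emod_nonneg _ hmpos.ne'
    have hQB : 0 ≤ Q * ∑ ν : Fin ((q' + 1) ^ 2 - 1), (i + s ν) % m :=
      mul_nonneg (by linarith) hB
    linarith [F1 i]
  have hFub : ∀ i : ℤ, F i ≤ i - D + 2 * g := by
    intro i
    have hA : (∑ μ : Fin q', (i + rr μ) % M) ≤ (Q - 1) * (M - 1) := by
      have h1 : (∑ μ : Fin q', (i + rr μ) % M) ≤ ∑ _μ : Fin q', (M - 1) :=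
        Finset.sum_le_sum fun μ _ => by
          have := Int.emod_lt_of_pos (i + rr μ) hMpos; omega
      rw [Finset.sum_const, Finset.card_univ, Fintype.card_fin, nsmul_eq_mul, hcard1] at h1
      exact h1
    have hB : (∑ ν : Fin ((q' + 1) ^ 2 - 1), (i + s ν) % m) ≤ (Q ^ 2 - 1) * (m - 1) := by
      have h1 : (∑ ν : Fin ((q' + 1) ^ 2 - 1), (i + s ν) % m)
          ≤ ∑ _ν : Fin ((q' + 1) ^ 2 - 1), (m - 1) :=
        Finset.sum_le_sum fun ν _ => by
          have := Int.emod_lt_of_pos (i + s ν) hmpos; omega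
      rw [Finset.sum_const, Finset.card_univ, Fintype.card_fin, nsmul_eq_mul, hcard2] at h1
      exact h1
    have hQB : Q * (∑ ν : Fin ((q' + 1) ^ 2 - 1), (i + s ν) % m)
        ≤ Q * ((Q ^ 2 - 1) * (m - 1)) := mul_le_mul_of_nonneg_left hB (by linarith)
    linarith [F1 i, hgen1]
  have hFt : ∀ i : ℤ, i < -r0 → F i ≤ t := by
    intro i hi
    have h1 := hFub i
    linarith
  -- periodicity
  have hper : ∀ i k : ℤ, F (i + M * k) = F i + M * k := by
    intro i k
    rw [F1 (i + M * k), F1 i]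
    have e1 : ∀ μ : Fin q', (i + M * k + rr μ) % M = (i + rr μ) % M := fun μ => by
      rw [show i + M * k + rr μ = (i + rr μ) + k * M by ring, Int.add_mul_emod_self_right]
    have e2 : ∀ ν : Fin ((q' + 1) ^ 2 - 1), (i + M * k + s ν) % m = (i + s ν) % m := fun ν => by
      rw [show i + M * k + s ν = (i + s ν) + (k * (Q + 1)) * m by rw [hMdef]; ring,
        Int.add_mul_emod_self_right]
    rw [Finset.sum_congr rfl (fun μ _ => e1 μ), Finset.sum_congr rfl (fun ν _ => e2 ν)]
    ring
  -- the bijection with the 1-D lattice set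
  have hbij : OmegaSet (q' + 1) hq.pos m r s t
      = (fun i : ℤ => (i, fun μ : Fin q' => -((i + rr μ) / M),
          fun ν : Fin ((q' + 1) ^ 2 - 1) => -((i + s ν) / m))) ''
        {i : ℤ | 0 ≤ i + r0 ∧ F i ≤ t} := by
    ext p
    obtain ⟨i, jj, kk⟩ := p
    simp only [OmegaSet, Set.mem_setOf_eq, Set.mem_image]
    constructor
    · rintro ⟨h0, hj, hk, hle⟩
      have hjj : ∀ μ : Fin q', jj μ = -((i + rr μ) / M) := by
        intro μ
        have h : 0 ≤ i + M * jj μ + rr μ ∧ i + M * jj μ + rr μ < M := hj μ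
        exact (omega_ediv_unique (x := i + rr μ) (j := jj μ) hMpos).mp
          ⟨by linarith [h.1], by linarith [h.2]⟩
      have hkk : ∀ ν : Fin ((q' + 1) ^ 2 - 1), kk ν = -((i + s ν) / m) := by
        intro ν
        have h : 0 ≤ i + m * kk ν + s ν ∧ i + m * kk ν + s ν < m := hk ν
        exact (omega_ediv_unique (x := i + s ν) (j := kk ν) hmpos).mp
          ⟨by linarith [h.1], by linarith [h.2]⟩
      have hle' : Q ^ 3 * i + M * (∑ μ, jj μ) + m * Q * (∑ ν, kk ν) ≤ t := hle
      have hsj : (∑ μ, jj μ) = -∑ μ : Fin q', (i + rr μ) / M := by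
        rw [Finset.sum_congr rfl fun μ _ => hjj μ, Finset.sum_neg_distrib]
      have hsk : (∑ ν, kk ν) = -∑ ν : Fin ((q' + 1) ^ 2 - 1), (i + s ν) / m := by
        rw [Finset.sum_congr rfl fun ν _ => hkk ν, Finset.sum_neg_distrib]
      rw [hsj, hsk] at hle'
      have hFle : F i ≤ t := by
        have hFi : F i = Q ^ 3 * i - M * (∑ μ : Fin q', (i + rr μ) / M)
            - m * Q * (∑ ν : Fin ((q' + 1) ^ 2 - 1), (i + s ν) / m) := by simp only [hFdef]
        rw [hFi]; linarith
      refine ⟨i, ⟨h0, hFle⟩, ?_⟩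
      refine Prod.ext rfl (Prod.ext ?_ ?_) <;> simp only
      · exact funext fun μ => (hjj μ).symm
      · exact funext fun ν => (hkk ν).symm
    · rintro ⟨i, ⟨h0, hFle⟩, heq⟩
      injection heq with h1 h2
      injection h2 with h2 h3
      subst h1; subst h2; subst h3
      refine ⟨h0, fun μ => ?_, fun ν => ?_, ?_⟩
      · have h := (omega_ediv_unique (x := i + rr μ) (j := -((i + rr μ) / M)) hMpos).mpr rfl
        exact ⟨by show 0 ≤ i + M * (-((i + rr μ) / M)) + rr μ; linarith [h.1],
          by show i + M * (-((i + rr μ) / M)) + rr μ < M; linarith [h.2]⟩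
      · have h := (omega_ediv_unique (x := i + s ν) (j := -((i + s ν) / m)) hmpos).mpr rfl
        exact ⟨by show 0 ≤ i + m * (-((i + s ν) / m)) + s ν; linarith [h.1],
          by show i + m * (-((i + s ν) / m)) + s ν < m; linarith [h.2]⟩
      · show Q ^ 3 * i + M * (∑ μ : Fin q', -((i + rr μ) / M))
          + m * Q * (∑ ν : Fin ((q' + 1) ^ 2 - 1), -((i + s ν) / m)) ≤ t
        rw [Finset.sum_neg_distrib, Finset.sum_neg_distrib]
        have hFi : F i = Q ^ 3 * i - M * (∑ μ : Fin q', (i + rr μ) / M)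
            - m * Q * (∑ ν : Fin ((q' + 1) ^ 2 - 1), (i + s ν) / m) := by simp only [hFdef]
        rw [hFi] at hFle
        linarith
  have hRsplit : (∑ μ, r μ) = r0 + R' := by
    rw [Fin.sum_univ_succ, hR'def, hr0def]
    rfl
  clear_value Q M r0 rr R' S' D F
  set L : ℤ := -r0 - M with hLdef
  set H : ℤ := t + D with hHdef
  have hr0H : -r0 - 1 ≤ H := by
    rw [hHdef]; linarith
  set S0 : Finset ℤ := Finset.filter (fun i => F i ≤ t) (Finset.Icc (-r0) H) with hS0def
  set Sbig : Finset ℤ := Finset.filter (fun i => F i ≤ t) (Finset.Icc L H) with hSbigdef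
  have hTS0 : {i : ℤ | 0 ≤ i + r0 ∧ F i ≤ t} = ↑S0 := by
    ext i
    simp only [Set.mem_setOf_eq, hS0def, Finset.coe_filter, Finset.mem_Icc]
    constructor
    · rintro ⟨h1, h2⟩
      exact ⟨⟨by omega, by have := hFlow i; linarith⟩, h2⟩
    · rintro ⟨⟨h1, _⟩, h2⟩
      exact ⟨by omega, h2⟩
  have hncard : ((OmegaSet (q' + 1) hq.pos m r s t).ncard : ℤ) = (S0.card : ℤ) := by
    rw [hbij, Set.ncard_image_of_injective _
      (fun a b hab => by simpa using congrArg Prod.fst hab), hTS0, Set.ncard_coe_finset]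
  have hsplit : (Sbig.card : ℤ) = M + (S0.card : ℤ) := by
    have hLr0 : L ≤ -r0 := by rw [hLdef]; linarith
    have hunion : Finset.Icc L H = Finset.Ico L (-r0) ∪ Finset.Icc (-r0) H := by
      ext x
      simp only [Finset.mem_Icc, Finset.mem_union, Finset.mem_Ico]
      omega
    have hdisj : Disjoint (Finset.filter (fun i => F i ≤ t) (Finset.Ico L (-r0)))
        (Finset.filter (fun i => F i ≤ t) (Finset.Icc (-r0) H)) := by
      apply Finset.disjoint_filter_filter
      rw [Finset.disjoint_left]
      intro a ha hb
      simp only [Finset.mem_Ico] at ha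
      simp only [Finset.mem_Icc] at hb
      omega
    have hfull : Finset.filter (fun i => F i ≤ t) (Finset.Ico L (-r0)) = Finset.Ico L (-r0) :=
      Finset.filter_true_of_mem fun i hi => hFt i (Finset.mem_Ico.mp hi).2
    rw [hSbigdef, hunion, Finset.filter_union, Finset.card_union_of_disjoint hdisj, hfull,
      ← hS0def]
    push_cast
    rw [Int.card_Ico, show -r0 - L = M by rw [hLdef]; ring,
      Int.toNat_of_nonneg hMpos.le]
  have hfiber : (Sbig.card : ℤ) = M + ∑ i0 ∈ Finset.Ico L (L + M), (t - F i0) / M := by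
    have hLM : L + M = -r0 := by rw [hLdef]; ring
    have hmem : ∀ i ∈ Sbig, L + (i - L) % M ∈ Finset.Ico L (L + M) := by
      intro i _
      have h1 := Int.emod_nonneg (i - L) hMpos.ne'
      have h2 := Int.emod_lt_of_pos (i - L) hMpos
      simp only [Finset.mem_Ico]
      omega
    have hcardfib : ∀ i0 ∈ Finset.Ico L (L + M),
        ((Finset.filter (fun i => L + (i - L) % M = i0) Sbig).card : ℤ)
          = (t - F i0) / M + 1 := by
      intro i0 hi0
      simp only [Finset.mem_Ico] at hi0
      have hFi0 : F i0 ≤ t := hFt i0 (by omega)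
      have hdivnn : 0 ≤ (t - F i0) / M := Int.ediv_nonneg (by linarith) hMpos.le
      have himg : Finset.filter (fun i => L + (i - L) % M = i0) Sbig
          = Finset.image (fun k => i0 + M * k) (Finset.Icc 0 ((t - F i0) / M)) := by
        ext x
        simp only [Finset.mem_filter, hSbigdef, Finset.mem_Icc, Finset.mem_image,
          Finset.mem_Icc]
        constructor
        · rintro ⟨⟨⟨hxL, hxH⟩, hxF⟩, hxmod⟩
          set k : ℤ := (x - L) / M with hkdef
          have hdecomp : M * k + (x - L) % M = x - L := Int.mul_ediv_add_emod (x - L) M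
          have hx : x = i0 + M * k := by linarith
          have hk0 : 0 ≤ k := Int.ediv_nonneg (by linarith) hMpos.le
          have hFx : F x = F i0 + M * k := by rw [hx]; exact hper i0 k
          refine ⟨k, ⟨hk0, ?_⟩, hx.symm⟩
          rw [Int.le_ediv_iff_mul_le hMpos]
          linarith
        · rintro ⟨k, ⟨hk0, hk1⟩, rfl⟩
          have hkM : k * M ≤ t - F i0 := by rwa [← Int.le_ediv_iff_mul_le hMpos]
          have hF := hper i0 k
          have hMk : 0 ≤ M * k := mul_nonneg hMpos.le hk0
          have hle : F (i0 + M * k) ≤ t := by linarith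
          refine ⟨⟨⟨by linarith, ?_⟩, hle⟩, ?_⟩
          · have := hFlow (i0 + M * k)
            rw [hHdef]
            linarith
          · rw [show i0 + M * k - L = (i0 - L) + k * M by ring, Int.add_mul_emod_self_right,
              Int.emod_eq_of_lt (by omega) (by omega)]
            omega
      rw [himg, Finset.card_image_of_injective _ (fun a b hab => by
        simpa using mul_left_cancel₀ hMpos.ne' (add_left_cancel hab)), Int.card_Icc]
      have htn : ∀ v : ℤ, 0 ≤ v → (((v + 1 - 0).toNat : ℕ) : ℤ) = v + 1 := by
        intro v hv; omega
      exact htn _ hdivnn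
    have hsumcard := Finset.card_eq_sum_card_fiberwise hmem
    have hcast : (Sbig.card : ℤ) = ∑ i0 ∈ Finset.Ico L (L + M), ((t - F i0) / M + 1) := by
      rw [hsumcard]
      push_cast
      exact Finset.sum_congr rfl hcardfib
    rw [hcast, Finset.sum_add_distrib, Finset.sum_const, Int.card_Ico,
      show L + M - L = M by ring, nsmul_eq_mul, Int.toNat_of_nonneg hMpos.le]
    ring
  have hsum : 2 * ∑ i0 ∈ Finset.Ico L (L + M), (t - F i0) / M
      = 2 * (1 - g + t + (∑ μ, r μ) + Q * S') := by
    have hQ1pos : (0:ℤ) < Q + 1 := by linarith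
    have hcast3 : ((q' + 2 : ℕ) : ℤ) = Q + 1 := by rw [hQ1]; push_cast; ring
    have hmM : m * ((q' + 2 : ℕ) : ℤ) = M := by rw [hcast3, hMdef]
    set hh : ℤ → ℤ := fun x =>
      t - Q ^ 3 * x + Q * m * (∑ ν : Fin ((q' + 1) ^ 2 - 1), (x + s ν) / m) with hhdef
    have step1 : ∀ i0 : ℤ, (t - F i0) / M
        = (∑ μ : Fin q', (i0 + rr μ) / M) + hh i0 / M := by
      intro i0
      have h1 : t - F i0 = hh i0 + (∑ μ : Fin q', (i0 + rr μ) / M) * M := by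
        simp only [hFdef, hhdef]; ring
      rw [h1, Int.add_mul_ediv_right _ _ hMpos.ne']
      ring
    rw [Finset.sum_congr rfl fun i0 _ => step1 i0, Finset.sum_add_distrib]
    have part1 : 2 * ∑ i0 ∈ Finset.Ico L (L + M), ∑ μ : Fin q', (i0 + rr μ) / M
        = 2 * R' + (Q - 1) * (2 * L) := by
      rw [Finset.sum_comm, Finset.mul_sum]
      have hμ : ∀ μ : Fin q', 2 * ∑ i0 ∈ Finset.Ico L (L + M), (i0 + rr μ) / M
          = 2 * rr μ + 2 * L := by
        intro μ
        rw [Finset.sum_congr rfl fun b _ => by rw [show b + rr μ = rr μ + b from add_comm _ _]]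
        exact omega_sum_ediv_window_one hMpos (rr μ) L
      rw [Finset.sum_congr rfl fun μ _ => hμ μ, Finset.sum_add_distrib, Finset.sum_const,
        Finset.card_univ, Fintype.card_fin, nsmul_eq_mul, hcard1, ← Finset.mul_sum, ← hR'def]
    have hhs : ∀ (b : ℤ) (j : ℕ), hh (b + m * (j:ℤ)) = hh b - Q * m * (j:ℤ) := by
      intro b j
      simp only [hhdef]
      have he : ∀ ν : Fin ((q' + 1) ^ 2 - 1),
          (b + m * (j:ℤ) + s ν) / m = (b + s ν) / m + (j:ℤ) := fun ν => by
        rw [show b + m * (j:ℤ) + s ν = (b + s ν) + (j:ℤ) * m by ring,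
          Int.add_mul_ediv_right _ _ hmpos.ne']
      rw [Finset.sum_congr rfl fun ν _ => he ν, Finset.sum_add_distrib, Finset.sum_const,
        Finset.card_univ, Fintype.card_fin, nsmul_eq_mul, hcard2]
      ring
    have hsplit2 : ∑ i0 ∈ Finset.Ico L (L + M), hh i0 / M
        = ∑ j ∈ Finset.range (q' + 2), ∑ b ∈ Finset.Ico L (L + m), hh (b + m * (j:ℤ)) / M := by
      have h := omega_sum_Ico_split (fun x => hh x / M) L m hmpos.le (q' + 2)
      rw [hmM] at h
      exact h
    have hswap : ∑ j ∈ Finset.range (q' + 2), ∑ b ∈ Finset.Ico L (L + m), hh (b + m * (j:ℤ)) / M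
        = ∑ b ∈ Finset.Ico L (L + m), ∑ j ∈ Finset.range (q' + 2), (hh b - Q * m * (j:ℤ)) / M := by
      rw [Finset.sum_comm]
      exact Finset.sum_congr rfl fun b _ => Finset.sum_congr rfl fun j _ => by rw [hhs b j]
    rw [hsplit2, hswap]
    have hEq1 : 2 * ∑ j ∈ Finset.range (q' + 2), (j:ℤ) = (Q + 1) * Q := by
      have h := omega_gauss (Q + 1) (by linarith)
      rw [← hcast3, omega_sum_range_intIco (fun y => y) (q' + 2)] at h
      rw [h, hcast3]
      ring
    have hinner : ∀ b : ℤ, 2 * ∑ j ∈ Finset.range (q' + 2), (hh b - Q * m * (j:ℤ)) / M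
        = 2 * (hh b / m) - Q * (Q + 1) := by
      intro b
      have hterm : ∀ j : ℤ, (hh b - Q * m * j) / M = (hh b / m + j) / (Q + 1) - j := by
        intro j
        set v : ℤ := hh b / m with hv
        set ρ : ℤ := hh b % m with hρ
        have hρ0 : 0 ≤ ρ := Int.emod_nonneg _ hmpos.ne'
        have hρ1 : ρ < m := Int.emod_lt_of_pos _ hmpos
        have hdec : hh b = m * v + ρ := (Int.mul_ediv_add_emod _ _).symm
        have h1 : hh b - Q * m * j = m * (v - Q * j) + ρ := by rw [hdec]; ring
        rw [h1, hMdef, omega_div_div hmpos hQ1pos hρ0 hρ1,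
          show v - Q * j = (v + j) + (-j) * (Q + 1) by ring,
          Int.add_mul_ediv_right _ _ (by linarith : (Q:ℤ) + 1 ≠ 0)]
        ring
      rw [Finset.sum_congr rfl fun (j : ℕ) _ => hterm (j:ℤ), Finset.sum_sub_distrib, mul_sub]
      have h2 : ∑ j ∈ Finset.range (q' + 2), (hh b / m + (j:ℤ)) / (Q + 1)
          = ∑ e ∈ Finset.Ico (0:ℤ) (0 + (Q + 1)), (hh b / m + e) / (Q + 1) := by
        rw [← omega_sum_range_intIco (fun e => (hh b / m + e) / (Q + 1)) (q' + 2), hcast3,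
          zero_add]
      have h3 := omega_sum_ediv_window_one hQ1pos (hh b / m) 0
      rw [h2]
      linarith [h3, hEq1]
    have hbsum : 2 * ∑ b ∈ Finset.Ico L (L + m),
          ∑ j ∈ Finset.range (q' + 2), (hh b - Q * m * (j:ℤ)) / M
        = 2 * (∑ b ∈ Finset.Ico L (L + m), hh b / m) - m * (Q * (Q + 1)) := by
      rw [Finset.mul_sum, Finset.sum_congr rfl fun b _ => hinner b, Finset.sum_sub_distrib,
        Finset.sum_const, Int.card_Ico, show L + m - L = m by ring, nsmul_eq_mul,
        Int.toNat_of_nonneg hmpos.le, ← Finset.mul_sum]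
    have hvb : ∀ b : ℤ, hh b / m
        = (t + (-Q ^ 3) * b) / m + Q * ∑ ν : Fin ((q' + 1) ^ 2 - 1), (b + s ν) / m := by
      intro b
      simp only [hhdef]
      rw [show t - Q ^ 3 * b + Q * m * (∑ ν : Fin ((q' + 1) ^ 2 - 1), (b + s ν) / m)
          = (t + (-Q ^ 3) * b) + (Q * ∑ ν : Fin ((q' + 1) ^ 2 - 1), (b + s ν) / m) * m by ring,
        Int.add_mul_ediv_right _ _ hmpos.ne']
    have hA : 2 * ∑ b ∈ Finset.Ico L (L + m), (t + (-Q ^ 3) * b) / m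
        = 2 * t + 2 * (-Q ^ 3) * L + (-Q ^ 3 - 1) * (m - 1) :=
      omega_sum_ediv_window hmpos hcop t L
    have hB : 2 * ∑ b ∈ Finset.Ico L (L + m), ∑ ν : Fin ((q' + 1) ^ 2 - 1), (b + s ν) / m
        = 2 * S' + (Q ^ 2 - 1) * (2 * L) := by
      rw [Finset.sum_comm, Finset.mul_sum]
      have hν : ∀ ν : Fin ((q' + 1) ^ 2 - 1), 2 * ∑ b ∈ Finset.Ico L (L + m), (b + s ν) / m
          = 2 * s ν + 2 * L := by
        intro ν
        rw [Finset.sum_congr rfl fun b _ => by rw [show b + s ν = s ν + b from add_comm _ _]]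
        exact omega_sum_ediv_window_one hmpos (s ν) L
      rw [Finset.sum_congr rfl fun ν _ => hν ν, Finset.sum_add_distrib, Finset.sum_const,
        Finset.card_univ, Fintype.card_fin, nsmul_eq_mul, hcard2, ← Finset.mul_sum, ← hS'def]
    have hvbsum : 2 * (∑ b ∈ Finset.Ico L (L + m), hh b / m)
        = (2 * t + 2 * (-Q ^ 3) * L + (-Q ^ 3 - 1) * (m - 1))
          + Q * (2 * S' + (Q ^ 2 - 1) * (2 * L)) := by
      rw [Finset.sum_congr rfl fun b _ => hvb b, Finset.sum_add_distrib, mul_add, hA]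
      congr 1
      rw [← Finset.mul_sum]
      linear_combination Q * hB
    rw [mul_add, part1, hbsum, hvbsum]
    linear_combination hgen2 - 2 * hLdef - 2 * hRsplit
  rw [hncard]
  have hS0val : (S0.card : ℤ) = ∑ i0 ∈ Finset.Ico L (L + M), (t - F i0) / M := by linarith
  rw [hS0val]
  linarith [hsum]
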